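/- Let f: [0,T] → ℝ be a decreasing differentiable function. Suppose there exist C₀ > 0 and α ∈ (0,1] such that for every ε > 0 and every t ∈ [0,T], (1/ε) ∫_{t-ε}^{t} f(τ) dτ - f(t) ≤ C₀ ε^α, where f is extended by f(τ) = f(0) for τ < 0. Then there is a constant C (depending on C₀ and α) such that |f(t) - f(s)| ≤ C |t - s|^α for all s, t ∈ [0,T]. -/
import Mathlib


open MeasureTheory intervalIntegral

/-- If `f` is decreasing and differentiable on `[0,T]` (extended by `f(0)` for negative times)
and the backward `ε`-averages satisfy `(1/ε)∫_{t-ε}^t f - f(t) ≤ C₀ ε^α`, then `f` is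
`α`-Hölder continuous on `[0,T]`. -/
theorem stmt4 (T : ℝ) (hT : 0 < T) (f : ℝ → ℝ)
    (hmono : AntitoneOn f (Set.Icc 0 T)) (hdiff : DifferentiableOn ℝ f (Set.Icc 0 T))
    (C₀ α : ℝ) (hC₀ : 0 < C₀) (hα : 0 < α) (hα1 : α ≤ 1)
    (h : ∀ ε > (0 : ℝ), ∀ t ∈ Set.Icc (0 : ℝ) T,
      (1 / ε) * (∫ τ in (t - ε)..t, f (max τ 0)) - f t ≤ C₀ * ε ^ α) :
    ∃ C > (0 : ℝ), ∀ s ∈ Set.Icc (0 : ℝ) T, ∀ t ∈ Set.Icc (0 : ℝ) T,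
      |f t - f s| ≤ C * |t - s| ^ α := by
  have hganti : ∀ x y : ℝ, x ≤ y → y ≤ T → f (max y 0) ≤ f (max x 0) := by
    intro x y hxy hyT
    exact hmono ⟨le_max_right _ _, max_le (hxy.trans hyT) hT.le⟩
      ⟨le_max_right _ _, max_le hyT hT.le⟩ (max_le_max hxy le_rfl)
  have hint : ∀ a b : ℝ, a ≤ b → b ≤ T →
      IntervalIntegrable (fun τ => f (max τ 0)) volume a b := by
    intro a b hab hbT
    apply AntitoneOn.intervalIntegrable
    intro x hx y hy hxy
    rw [Set.uIcc_of_le hab] at hy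
    exact hganti x y hxy (hy.2.trans hbT)
  have hlow : ∀ a b : ℝ, a ≤ b → b ≤ T →
      (b - a) * f (max b 0) ≤ ∫ τ in a..b, f (max τ 0) := by
    intro a b hab hbT
    have := intervalIntegral.integral_mono_on (f := fun _ => f (max b 0)) hab
      intervalIntegrable_const (hint a b hab hbT)
      (fun x hx => hganti x b hx.2 hbT)
    simpa using this
  have key : ∀ s ∈ Set.Icc (0:ℝ) T, ∀ t ∈ Set.Icc (0:ℝ) T, s < t →
      f s - f t ≤ 4 * C₀ * (t - s) ^ α := by
    intro s hs t ht hst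
    set u : ℝ := t - s with hu
    have hu0 : (0:ℝ) < u := by simp [hu]; linarith
    have hε : (0:ℝ) < 2 * u := by linarith
    have H := h (2 * u) hε t ht
    have hsplit : (∫ τ in (t - 2*u)..t, f (max τ 0))
        = (∫ τ in (t - 2*u)..s, f (max τ 0)) + ∫ τ in s..t, f (max τ 0) :=
      (intervalIntegral.integral_add_adjacent_intervals
        (hint _ s (by simp [hu]; linarith) hs.2) (hint s t hst.le ht.2)).symm
    have h1 : (s - (t - 2*u)) * f (max s 0) ≤ ∫ τ in (t - 2*u)..s, f (max τ 0) :=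
      hlow _ s (by simp [hu]; linarith) hs.2
    have h2 : (t - s) * f (max t 0) ≤ ∫ τ in s..t, f (max τ 0) :=
      hlow s t hst.le ht.2
    rw [max_eq_left hs.1] at h1
    rw [max_eq_left ht.1] at h2
    have hcoef : s - (t - 2*u) = u := by simp [hu]; ring
    rw [hcoef] at h1
    have hI : u * f s + u * f t ≤ ∫ τ in (t - 2*u)..t, f (max τ 0) := by
      rw [hsplit]; rw [← hu] at h2; linarith
    have H' : (∫ τ in (t - 2*u)..t, f (max τ 0)) ≤ (C₀ * (2*u) ^ α + f t) * (2*u) := by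
      have h1' : (1 / (2*u)) * (∫ τ in (t - 2*u)..t, f (max τ 0))
          = (∫ τ in (t - 2*u)..t, f (max τ 0)) / (2*u) := by ring
      rw [h1'] at H
      have := (div_le_iff₀ hε).mp (by linarith : (∫ τ in (t - 2*u)..t, f (max τ 0)) / (2*u) ≤ C₀ * (2*u) ^ α + f t)
      linarith
    have hmain : f s - f t ≤ 2 * (C₀ * (2*u) ^ α) := by
      nlinarith [hI, H', hu0]
    have hpow : (2*u) ^ α ≤ 2 * u ^ α := by
      rw [Real.mul_rpow (by norm_num) hu0.le]
      have : (2:ℝ) ^ α ≤ 2 ^ (1:ℝ) :=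
        Real.rpow_le_rpow_of_exponent_le (by norm_num) hα1
      have h2pow : (2:ℝ) ^ α ≤ 2 := by simpa using this
      have : u ^ α ≥ 0 := Real.rpow_nonneg hu0.le α
      nlinarith
    calc f s - f t ≤ 2 * (C₀ * (2*u) ^ α) := hmain
      _ ≤ 2 * (C₀ * (2 * u ^ α)) := by nlinarith
      _ = 4 * C₀ * u ^ α := by ring
  refine ⟨4 * C₀, by linarith, ?_⟩
  intro s hs t ht
  rcases lt_trichotomy s t with hst | hst | hst
  · have hle : f t ≤ f s := hmono hs ht hst.le
    rw [abs_of_nonpos (by linarith), abs_of_pos (by linarith : (0:ℝ) < t - s)]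
    have := key s hs t ht hst
    linarith
  · subst hst
    simp [Real.zero_rpow hα.ne']
  · have hle : f s ≤ f t := hmono ht hs hst.le
    rw [abs_of_nonneg (by linarith), abs_of_neg (by linarith : t - s < 0)]
    have := key t ht s hs hst
    have hnn : (0:ℝ) ≤ -(t - s) := by linarith
    have : f t - f s ≤ 4 * C₀ * (s - t) ^ α := by linarith
    calc f t - f s ≤ 4 * C₀ * (s - t) ^ α := this
      _ = 4 * C₀ * (-(t - s)) ^ α := by ring_nf
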